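/- In the natural deduction system N2Int the following four rules are derivable: (i) if Γ1;Δ1 ⊢+_{N2Int} φ∨ψ, Γ2∪{φ};Δ2 ⊢−_{N2Int} χ and Γ3∪{ψ};Δ3 ⊢−_{N2Int} χ, then Γ1∪Γ2∪Γ3;Δ1∪Δ2∪Δ3 ⊢−_{N2Int} χ; (ii) if Γ;Δ ⊢+_{N2Int} ⊥ then Γ;Δ ⊢−_{N2Int} φ for every formula φ; (iii) if Γ1;Δ1 ⊢−_{N2Int} φ∧ψ, Γ2;Δ2∪{φ} ⊢+_{N2Int} χ and Γ3;Δ3∪{ψ} ⊢+_{N2Int} χ, then Γ1∪Γ2∪Γ3;Δ1∪Δ2∪Δ3 ⊢+_{N2Int} χ; (iv) if Γ;Δ ⊢−_{N2Int} ⊤ then Γ;Δ ⊢+_{N2Int} φ for every formula φ. Consequently, the deducibility relations ⊢+ and ⊢− of N2Int and of N2Int* coincide. -/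
import Mathlib


/-- Signs: `pos` for proof/assertion, `neg` for refutation/rejection. -/
inductive Sign where
  | pos
  | neg
deriving DecidableEq

/-- The dual of a sign. -/
def Sign.dual : Sign → Sign
  | .pos => .neg
  | .neg => .pos

/-- Formulas of the bilateral logic 2Int. -/
inductive Form where
  | atom : ℕ → Form
  | bot : Form
  | top : Form
  | and : Form → Form → Form
  | or : Form → Form → Form
  | imp : Form → Form → Form
  | coimp : Form → Form → Form
deriving DecidableEq

/-- Natural deduction for 2Int: `ND true` is N2Int*, `ND false` is N2Int. -/
inductive ND (star : Bool) : Set Form → Set Form → Sign → Form → Prop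
  | hypPos {Γ Δ : Set Form} {φ : Form} : φ ∈ Γ → ND star Γ Δ .pos φ
  | hypNeg {Γ Δ : Set Form} {φ : Form} : φ ∈ Δ → ND star Γ Δ .neg φ
  | topI {Γ Δ : Set Form} : ND star Γ Δ .pos .top
  | botI {Γ Δ : Set Form} : ND star Γ Δ .neg .bot
  | andI {Γ Δ : Set Form} {φ ψ : Form} : ND star Γ Δ .pos φ → ND star Γ Δ .pos ψ →
      ND star Γ Δ .pos (φ.and ψ)
  | andE1 {Γ Δ : Set Form} {φ ψ : Form} : ND star Γ Δ .pos (φ.and ψ) → ND star Γ Δ .pos φ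
  | andE2 {Γ Δ : Set Form} {φ ψ : Form} : ND star Γ Δ .pos (φ.and ψ) → ND star Γ Δ .pos ψ
  | orI1 {Γ Δ : Set Form} {φ ψ : Form} : ND star Γ Δ .pos φ → ND star Γ Δ .pos (φ.or ψ)
  | orI2 {Γ Δ : Set Form} {φ ψ : Form} : ND star Γ Δ .pos ψ → ND star Γ Δ .pos (φ.or ψ)
  | impI {Γ Δ : Set Form} {φ ψ : Form} : ND star (insert φ Γ) Δ .pos ψ → ND star Γ Δ .pos (φ.imp ψ)
  | impE {Γ Δ : Set Form} {φ ψ : Form} : ND star Γ Δ .pos (φ.imp ψ) → ND star Γ Δ .pos φ →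
      ND star Γ Δ .pos ψ
  | coimpI {Γ Δ : Set Form} {φ ψ : Form} : ND star Γ Δ .pos φ → ND star Γ Δ .neg ψ →
      ND star Γ Δ .pos (φ.coimp ψ)
  | coimpE1 {Γ Δ : Set Form} {φ ψ : Form} : ND star Γ Δ .pos (φ.coimp ψ) → ND star Γ Δ .pos φ
  | coimpE2 {Γ Δ : Set Form} {φ ψ : Form} : ND star Γ Δ .pos (φ.coimp ψ) → ND star Γ Δ .neg ψ
  | orIneg {Γ Δ : Set Form} {φ ψ : Form} : ND star Γ Δ .neg φ → ND star Γ Δ .neg ψ →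
      ND star Γ Δ .neg (φ.or ψ)
  | orE1neg {Γ Δ : Set Form} {φ ψ : Form} : ND star Γ Δ .neg (φ.or ψ) → ND star Γ Δ .neg φ
  | orE2neg {Γ Δ : Set Form} {φ ψ : Form} : ND star Γ Δ .neg (φ.or ψ) → ND star Γ Δ .neg ψ
  | andI1neg {Γ Δ : Set Form} {φ ψ : Form} : ND star Γ Δ .neg φ → ND star Γ Δ .neg (φ.and ψ)
  | andI2neg {Γ Δ : Set Form} {φ ψ : Form} : ND star Γ Δ .neg ψ → ND star Γ Δ .neg (φ.and ψ)
  | coimpIneg {Γ Δ : Set Form} {φ ψ : Form} : ND star Γ (insert ψ Δ) .neg φ →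
      ND star Γ Δ .neg (φ.coimp ψ)
  | coimpEneg {Γ Δ : Set Form} {φ ψ : Form} : ND star Γ Δ .neg (φ.coimp ψ) → ND star Γ Δ .neg ψ →
      ND star Γ Δ .neg φ
  | impIneg {Γ Δ : Set Form} {φ ψ : Form} : ND star Γ Δ .pos φ → ND star Γ Δ .neg ψ →
      ND star Γ Δ .neg (φ.imp ψ)
  | impE1neg {Γ Δ : Set Form} {φ ψ : Form} : ND star Γ Δ .neg (φ.imp ψ) → ND star Γ Δ .pos φ
  | impE2neg {Γ Δ : Set Form} {φ ψ : Form} : ND star Γ Δ .neg (φ.imp ψ) → ND star Γ Δ .neg ψ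
  | orE {Γ Δ : Set Form} {φ ψ χ : Form} {s : Sign} (hs : star = true ∨ s = Sign.pos) :
      ND star Γ Δ .pos (φ.or ψ) → ND star (insert φ Γ) Δ s χ →
      ND star (insert ψ Γ) Δ s χ → ND star Γ Δ s χ
  | botE {Γ Δ : Set Form} {χ : Form} {s : Sign} (hs : star = true ∨ s = Sign.pos) :
      ND star Γ Δ .pos .bot → ND star Γ Δ s χ
  | andEneg {Γ Δ : Set Form} {φ ψ χ : Form} {s : Sign} (hs : star = true ∨ s = Sign.neg) :
      ND star Γ Δ .neg (φ.and ψ) → ND star Γ (insert φ Δ) s χ →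
      ND star Γ (insert ψ Δ) s χ → ND star Γ Δ s χ
  | topEneg {Γ Δ : Set Form} {χ : Form} {s : Sign} (hs : star = true ∨ s = Sign.neg) :
      ND star Γ Δ .neg .top → ND star Γ Δ s χ



lemma ND.weaken {star : Bool} {Γ Δ Γ' Δ' : Set Form} {s : Sign} {φ : Form}
    (h : ND star Γ Δ s φ) (hΓ : Γ ⊆ Γ') (hΔ : Δ ⊆ Δ') : ND star Γ' Δ' s φ := by
  induction h generalizing Γ' Δ' with
  | hypPos h => exact .hypPos (hΓ h)
  | hypNeg h => exact .hypNeg (hΔ h)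
  | topI => exact .topI
  | botI => exact .botI
  | andI _ _ ih1 ih2 => exact .andI (ih1 hΓ hΔ) (ih2 hΓ hΔ)
  | andE1 _ ih => exact .andE1 (ih hΓ hΔ)
  | andE2 _ ih => exact .andE2 (ih hΓ hΔ)
  | orI1 _ ih => exact .orI1 (ih hΓ hΔ)
  | orI2 _ ih => exact .orI2 (ih hΓ hΔ)
  | impI _ ih => exact .impI (ih (Set.insert_subset_insert hΓ) hΔ)
  | impE _ _ ih1 ih2 => exact .impE (ih1 hΓ hΔ) (ih2 hΓ hΔ)
  | coimpI _ _ ih1 ih2 => exact .coimpI (ih1 hΓ hΔ) (ih2 hΓ hΔ)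
  | coimpE1 _ ih => exact .coimpE1 (ih hΓ hΔ)
  | coimpE2 _ ih => exact .coimpE2 (ih hΓ hΔ)
  | orIneg _ _ ih1 ih2 => exact .orIneg (ih1 hΓ hΔ) (ih2 hΓ hΔ)
  | orE1neg _ ih => exact .orE1neg (ih hΓ hΔ)
  | orE2neg _ ih => exact .orE2neg (ih hΓ hΔ)
  | andI1neg _ ih => exact .andI1neg (ih hΓ hΔ)
  | andI2neg _ ih => exact .andI2neg (ih hΓ hΔ)
  | coimpIneg _ ih => exact .coimpIneg (ih hΓ (Set.insert_subset_insert hΔ))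
  | coimpEneg _ _ ih1 ih2 => exact .coimpEneg (ih1 hΓ hΔ) (ih2 hΓ hΔ)
  | impIneg _ _ ih1 ih2 => exact .impIneg (ih1 hΓ hΔ) (ih2 hΓ hΔ)
  | impE1neg _ ih => exact .impE1neg (ih hΓ hΔ)
  | impE2neg _ ih => exact .impE2neg (ih hΓ hΔ)
  | orE hs _ _ _ ih1 ih2 ih3 =>
      exact .orE hs (ih1 hΓ hΔ) (ih2 (Set.insert_subset_insert hΓ) hΔ)
        (ih3 (Set.insert_subset_insert hΓ) hΔ)
  | botE hs _ ih => exact .botE hs (ih hΓ hΔ)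
  | andEneg hs _ _ _ ih1 ih2 ih3 =>
      exact .andEneg hs (ih1 hΓ hΔ) (ih2 hΓ (Set.insert_subset_insert hΔ))
        (ih3 hΓ (Set.insert_subset_insert hΔ))
  | topEneg hs _ ih => exact .topEneg hs (ih hΓ hΔ)

/-- encode a refutation of χ as a proof of ⊤ ↤ χ -/
lemma ND.negEnc {star Γ Δ} {χ : Form} (h : ND star Γ Δ .neg χ) :
    ND star Γ Δ .pos (Form.top.coimp χ) := .coimpI .topI h

/-- encode a proof of χ as a refutation of χ → ⊥ -/
lemma ND.posEnc {star Γ Δ} {χ : Form} (h : ND star Γ Δ .pos χ) :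
    ND star Γ Δ .neg (χ.imp .bot) := .impIneg h .botI

lemma orEneg' {Γ₁ Γ₂ Γ₃ Δ₁ Δ₂ Δ₃ : Set Form} {φ ψ χ : Form}
    (h1 : ND false Γ₁ Δ₁ .pos (φ.or ψ)) (h2 : ND false (insert φ Γ₂) Δ₂ .neg χ)
    (h3 : ND false (insert ψ Γ₃) Δ₃ .neg χ) :
    ND false (Γ₁ ∪ Γ₂ ∪ Γ₃) (Δ₁ ∪ Δ₂ ∪ Δ₃) .neg χ := by
  have s1 : Γ₁ ⊆ Γ₁ ∪ Γ₂ ∪ Γ₃ := fun x hx => Or.inl (Or.inl hx)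
  have s2 : insert φ Γ₂ ⊆ insert φ (Γ₁ ∪ Γ₂ ∪ Γ₃) :=
    Set.insert_subset_insert fun x hx => Or.inl (Or.inr hx)
  have s3 : insert ψ Γ₃ ⊆ insert ψ (Γ₁ ∪ Γ₂ ∪ Γ₃) :=
    Set.insert_subset_insert fun x hx => Or.inr hx
  have d1 : Δ₁ ⊆ Δ₁ ∪ Δ₂ ∪ Δ₃ := fun x hx => Or.inl (Or.inl hx)
  have d2 : Δ₂ ⊆ Δ₁ ∪ Δ₂ ∪ Δ₃ := fun x hx => Or.inl (Or.inr hx)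
  have d3 : Δ₃ ⊆ Δ₁ ∪ Δ₂ ∪ Δ₃ := fun x hx => Or.inr hx
  exact .coimpE2 (ND.orE (Or.inr rfl) (h1.weaken s1 d1)
    ((h2.weaken s2 d2).negEnc) ((h3.weaken s3 d3).negEnc))

lemma botEneg' {Γ Δ : Set Form} {φ : Form} (h : ND false Γ Δ .pos .bot) :
    ND false Γ Δ .neg φ :=
  .coimpE2 (ND.botE (s := .pos) (χ := Form.top.coimp φ) (Or.inr rfl) h)

lemma andEpos' {Γ₁ Γ₂ Γ₃ Δ₁ Δ₂ Δ₃ : Set Form} {φ ψ χ : Form}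
    (h1 : ND false Γ₁ Δ₁ .neg (φ.and ψ)) (h2 : ND false Γ₂ (insert φ Δ₂) .pos χ)
    (h3 : ND false Γ₃ (insert ψ Δ₃) .pos χ) :
    ND false (Γ₁ ∪ Γ₂ ∪ Γ₃) (Δ₁ ∪ Δ₂ ∪ Δ₃) .pos χ := by
  have s1 : Γ₁ ⊆ Γ₁ ∪ Γ₂ ∪ Γ₃ := fun x hx => Or.inl (Or.inl hx)
  have s2 : Γ₂ ⊆ Γ₁ ∪ Γ₂ ∪ Γ₃ := fun x hx => Or.inl (Or.inr hx)
  have s3 : Γ₃ ⊆ Γ₁ ∪ Γ₂ ∪ Γ₃ := fun x hx => Or.inr hx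
  have d1 : Δ₁ ⊆ Δ₁ ∪ Δ₂ ∪ Δ₃ := fun x hx => Or.inl (Or.inl hx)
  have d2 : insert φ Δ₂ ⊆ insert φ (Δ₁ ∪ Δ₂ ∪ Δ₃) :=
    Set.insert_subset_insert fun x hx => Or.inl (Or.inr hx)
  have d3 : insert ψ Δ₃ ⊆ insert ψ (Δ₁ ∪ Δ₂ ∪ Δ₃) :=
    Set.insert_subset_insert fun x hx => Or.inr hx
  exact .impE1neg (ND.andEneg (Or.inr rfl) (h1.weaken s1 d1)
    ((h2.weaken s2 d2).posEnc) ((h3.weaken s3 d3).posEnc))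

lemma topEpos' {Γ Δ : Set Form} {φ : Form} (h : ND false Γ Δ .neg .top) :
    ND false Γ Δ .pos φ :=
  .impE1neg (ND.topEneg (s := .neg) (χ := φ.imp .bot) (Or.inr rfl) h)

lemma star_to_false {Γ Δ : Set Form} {s : Sign} {φ : Form}
    (h : ND true Γ Δ s φ) : ND false Γ Δ s φ := by
  induction h with
  | hypPos h => exact .hypPos h
  | hypNeg h => exact .hypNeg h
  | topI => exact .topI
  | botI => exact .botI
  | andI _ _ ih1 ih2 => exact .andI ih1 ih2
  | andE1 _ ih => exact .andE1 ih
  | andE2 _ ih => exact .andE2 ih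
  | orI1 _ ih => exact .orI1 ih
  | orI2 _ ih => exact .orI2 ih
  | impI _ ih => exact .impI ih
  | impE _ _ ih1 ih2 => exact .impE ih1 ih2
  | coimpI _ _ ih1 ih2 => exact .coimpI ih1 ih2
  | coimpE1 _ ih => exact .coimpE1 ih
  | coimpE2 _ ih => exact .coimpE2 ih
  | orIneg _ _ ih1 ih2 => exact .orIneg ih1 ih2
  | orE1neg _ ih => exact .orE1neg ih
  | orE2neg _ ih => exact .orE2neg ih
  | andI1neg _ ih => exact .andI1neg ih
  | andI2neg _ ih => exact .andI2neg ih
  | coimpIneg _ ih => exact .coimpIneg ih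
  | coimpEneg _ _ ih1 ih2 => exact .coimpEneg ih1 ih2
  | impIneg _ _ ih1 ih2 => exact .impIneg ih1 ih2
  | impE1neg _ ih => exact .impE1neg ih
  | impE2neg _ ih => exact .impE2neg ih
  | orE hs _ _ _ ih1 ih2 ih3 =>
      rename Sign => s'
      cases s' with
      | pos => exact ND.orE (Or.inr rfl) ih1 ih2 ih3
      | neg =>
          have := orEneg' ih1 ih2 ih3
          simpa using this
  | botE hs _ ih =>
      rename Sign => s'
      cases s' with
      | pos => exact ND.botE (Or.inr rfl) ih
      | neg => exact botEneg' ih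
  | andEneg hs _ _ _ ih1 ih2 ih3 =>
      rename Sign => s'
      cases s' with
      | neg => exact ND.andEneg (Or.inr rfl) ih1 ih2 ih3
      | pos =>
          have := andEpos' ih1 ih2 ih3
          simpa using this
  | topEneg hs _ ih =>
      rename Sign => s'
      cases s' with
      | neg => exact ND.topEneg (Or.inr rfl) ih
      | pos => exact topEpos' ih

lemma false_to_star {Γ Δ : Set Form} {s : Sign} {φ : Form}
    (h : ND false Γ Δ s φ) : ND true Γ Δ s φ := by
  induction h with
  | hypPos h => exact .hypPos h
  | hypNeg h => exact .hypNeg h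
  | topI => exact .topI
  | botI => exact .botI
  | andI _ _ ih1 ih2 => exact .andI ih1 ih2
  | andE1 _ ih => exact .andE1 ih
  | andE2 _ ih => exact .andE2 ih
  | orI1 _ ih => exact .orI1 ih
  | orI2 _ ih => exact .orI2 ih
  | impI _ ih => exact .impI ih
  | impE _ _ ih1 ih2 => exact .impE ih1 ih2
  | coimpI _ _ ih1 ih2 => exact .coimpI ih1 ih2
  | coimpE1 _ ih => exact .coimpE1 ih
  | coimpE2 _ ih => exact .coimpE2 ih
  | orIneg _ _ ih1 ih2 => exact .orIneg ih1 ih2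
  | orE1neg _ ih => exact .orE1neg ih
  | orE2neg _ ih => exact .orE2neg ih
  | andI1neg _ ih => exact .andI1neg ih
  | andI2neg _ ih => exact .andI2neg ih
  | coimpIneg _ ih => exact .coimpIneg ih
  | coimpEneg _ _ ih1 ih2 => exact .coimpEneg ih1 ih2
  | impIneg _ _ ih1 ih2 => exact .impIneg ih1 ih2
  | impE1neg _ ih => exact .impE1neg ih
  | impE2neg _ ih => exact .impE2neg ih
  | orE hs _ _ _ ih1 ih2 ih3 => exact .orE (Or.inl rfl) ih1 ih2 ih3
  | botE hs _ ih => exact .botE (Or.inl rfl) ih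
  | andEneg hs _ _ _ ih1 ih2 ih3 => exact .andEneg (Or.inl rfl) ih1 ih2 ih3
  | topEneg hs _ ih => exact .topEneg (Or.inl rfl) ih


theorem n2int_derivable_rules_and_coincidence :
    (∀ (Γ₁ Γ₂ Γ₃ Δ₁ Δ₂ Δ₃ : Set Form) (φ ψ χ : Form),
        ND false Γ₁ Δ₁ .pos (φ.or ψ) → ND false (insert φ Γ₂) Δ₂ .neg χ →
        ND false (insert ψ Γ₃) Δ₃ .neg χ →
        ND false (Γ₁ ∪ Γ₂ ∪ Γ₃) (Δ₁ ∪ Δ₂ ∪ Δ₃) .neg χ) ∧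
    (∀ (Γ Δ : Set Form) (φ : Form),
        ND false Γ Δ .pos .bot → ND false Γ Δ .neg φ) ∧
    (∀ (Γ₁ Γ₂ Γ₃ Δ₁ Δ₂ Δ₃ : Set Form) (φ ψ χ : Form),
        ND false Γ₁ Δ₁ .neg (φ.and ψ) → ND false Γ₂ (insert φ Δ₂) .pos χ →
        ND false Γ₃ (insert ψ Δ₃) .pos χ →
        ND false (Γ₁ ∪ Γ₂ ∪ Γ₃) (Δ₁ ∪ Δ₂ ∪ Δ₃) .pos χ) ∧
    (∀ (Γ Δ : Set Form) (φ : Form),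
        ND false Γ Δ .neg .top → ND false Γ Δ .pos φ) ∧
    (∀ (Γ Δ : Set Form) (s : Sign) (φ : Form),
        ND false Γ Δ s φ ↔ ND true Γ Δ s φ) := by
  refine ⟨fun _ _ _ _ _ _ _ _ _ h1 h2 h3 => orEneg' h1 h2 h3,
    fun _ _ _ h => botEneg' h,
    fun _ _ _ _ _ _ _ _ _ h1 h2 h3 => andEpos' h1 h2 h3,
    fun _ _ _ h => topEpos' h,
    fun _ _ _ _ => ⟨false_to_star, star_to_false⟩⟩
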